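/- Let σ be a nonzero finite Borel measure on ℝ and x ∈ ℝ. Then the function g_x : (0, ∞) → (0, ∞) defined by g_x(y) = ∫ (1 + t²)/((t - x)² + y²) dσ(t) is continuous, strictly decreasing, and tends to 0 as y → ∞. Consequently, there is at most one y > 0 with g_x(y) = 1, and such y exists if and only if ∫ (1 + t²)/(t - x)² dσ(t) > 1 (the integral possibly being +∞). -/

import Mathlib

open MeasureTheory Filter

namespace Stmt3Aux

noncomputable def f (x y t : ℝ) : ℝ := (1 + t ^ 2) / ((t - x) ^ 2 + y ^ 2)

lemma denom_pos {x y : ℝ} (hy : y ≠ 0) (t : ℝ) : 0 < (t - x) ^ 2 + y ^ 2 := by positivity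

lemma f_pos {x y : ℝ} (hy : y ≠ 0) (t : ℝ) : 0 < f x y t :=
  div_pos (by positivity) (denom_pos hy t)

lemma f_le {x y : ℝ} (hy : 0 < y) (t : ℝ) :
    f x y t ≤ 2 * (1 + x ^ 2) * (1 + 1 / y ^ 2) := by
  have hy2 : (0:ℝ) < y ^ 2 := by positivity
  rw [f, div_le_iff₀ (denom_pos hy.ne' t)]
  have h1 : (1 + t ^ 2) ≤ 2 * (1 + x ^ 2) * (1 + (t - x) ^ 2) := by
    nlinarith [sq_nonneg (t - x), sq_nonneg x, sq_nonneg (x * (t - x)), sq_nonneg (t - 2 * x)]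
  have h2 : (1 + (t - x) ^ 2) ≤ (1 + 1 / y ^ 2) * ((t - x) ^ 2 + y ^ 2) := by
    have : y ^ 2 * (1 / y ^ 2) = 1 := by field_simp
    nlinarith [sq_nonneg (t - x), div_pos one_pos hy2]
  calc (1 + t ^ 2) ≤ 2 * (1 + x ^ 2) * (1 + (t - x) ^ 2) := h1
    _ ≤ 2 * (1 + x ^ 2) * ((1 + 1 / y ^ 2) * ((t - x) ^ 2 + y ^ 2)) := by
        apply mul_le_mul_of_nonneg_left h2; positivity
    _ = 2 * (1 + x ^ 2) * (1 + 1 / y ^ 2) * ((t - x) ^ 2 + y ^ 2) := by ring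

lemma f_anti {x : ℝ} (t : ℝ) {y₁ y₂ : ℝ} (h1 : 0 < y₁) (h : y₁ ≤ y₂) :
    f x y₂ t ≤ f x y₁ t := by
  apply div_le_div_of_nonneg_left (by positivity) (denom_pos h1.ne' t)
  have : y₁ ^ 2 ≤ y₂ ^ 2 := by nlinarith
  linarith

lemma f_strict_anti {x : ℝ} (t : ℝ) {y₁ y₂ : ℝ} (h1 : 0 < y₁) (h : y₁ < y₂) :
    f x y₂ t < f x y₁ t := by
  apply div_lt_div_of_pos_left (by positivity) (denom_pos h1.ne' t)
  have : y₁ ^ 2 < y₂ ^ 2 := by nlinarith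
  linarith

lemma f_cont_t {x y : ℝ} (hy : y ≠ 0) : Continuous (f x y) := by
  apply Continuous.div (by continuity) (by continuity)
  exact fun t => (denom_pos hy t).ne'

lemma f_integrable (σ : Measure ℝ) [IsFiniteMeasure σ] {x y : ℝ} (hy : 0 < y) :
    Integrable (f x y) σ := by
  refine Integrable.mono' (integrable_const (2 * (1 + x ^ 2) * (1 + 1 / y ^ 2)))
    (f_cont_t hy.ne').aestronglyMeasurable (ae_of_all _ fun t => ?_)
  rw [Real.norm_eq_abs, abs_of_pos (f_pos hy.ne' t)]
  exact f_le hy t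

lemma g_contAt (σ : Measure ℝ) [IsFiniteMeasure σ] (x : ℝ) {y₀ : ℝ} (hy₀ : 0 < y₀) :
    ContinuousAt (fun y => ∫ t, f x y t ∂σ) y₀ := by
  have h2 : (0:ℝ) < y₀ / 2 := by linarith
  apply continuousAt_of_dominated (bound := fun _ => 2 * (1 + x ^ 2) * (1 + 1 / (y₀ / 2) ^ 2))
  · filter_upwards [eventually_ne_nhds hy₀.ne'] with y hy
    exact (f_cont_t hy).aestronglyMeasurable
  · filter_upwards [eventually_gt_nhds (show y₀ / 2 < y₀ by linarith)] with y hy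
    filter_upwards with t
    rw [Real.norm_eq_abs, abs_of_pos (f_pos (by linarith : (0:ℝ) < y).ne' t)]
    exact le_trans (f_anti t h2 hy.le) (f_le h2 t)
  · exact integrable_const _
  · filter_upwards with t
    apply ContinuousAt.div (by fun_prop) (by fun_prop)
    exact (denom_pos hy₀.ne' t).ne'

lemma g_strictAnti (σ : Measure ℝ) [IsFiniteMeasure σ] (hσ : σ ≠ 0) (x : ℝ)
    {y₁ y₂ : ℝ} (h1 : 0 < y₁) (h : y₁ < y₂) :
    ∫ t, f x y₂ t ∂σ < ∫ t, f x y₁ t ∂σ := by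
  have h2 : 0 < y₂ := h1.trans h
  have hi1 := f_integrable σ (x := x) h1
  have hi2 := f_integrable σ (x := x) h2
  have key : 0 < ∫ t, (f x y₁ t - f x y₂ t) ∂σ := by
    rw [integral_pos_iff_support_of_nonneg_ae]
    · have : Function.support (fun t => f x y₁ t - f x y₂ t) = Set.univ := by
        ext t; simp [sub_ne_zero.mpr (f_strict_anti t h1 h).ne']
      rw [this]
      simpa [Measure.measure_univ_pos] using hσ
    · exact ae_of_all _ fun t => sub_nonneg.mpr (f_strict_anti t h1 h).le
    · exact hi1.sub hi2
  rw [integral_sub hi1 hi2] at key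
  linarith

lemma g_tendsto (σ : Measure ℝ) [IsFiniteMeasure σ] (x : ℝ) :
    Tendsto (fun y => ∫ t, f x y t ∂σ) atTop (nhds 0) := by
  have := tendsto_integral_filter_of_dominated_convergence (μ := σ) (l := atTop)
    (F := fun y t => f x y t) (f := fun _ => (0:ℝ))
    (bound := fun _ => 2 * (1 + x ^ 2) * (1 + 1 / (1:ℝ) ^ 2))
    (by filter_upwards [eventually_ge_atTop (1:ℝ)] with y hy
        exact (f_cont_t (by linarith : y ≠ 0)).aestronglyMeasurable)
    (by filter_upwards [eventually_ge_atTop (1:ℝ)] with y hy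
        filter_upwards with t
        rw [Real.norm_eq_abs, abs_of_pos (f_pos (by linarith : (0:ℝ) < y).ne' t)]
        exact le_trans (f_anti t one_pos hy) (f_le one_pos t))
    (integrable_const _)
    (by filter_upwards with t
        have hb : Tendsto (fun y : ℝ => (1 + t ^ 2) / y ^ 2) atTop (nhds 0) := by
          apply Tendsto.div_atTop (tendsto_const_nhds)
          exact tendsto_pow_atTop (by norm_num)
        apply squeeze_zero' ?_ ?_ hb
        · filter_upwards [eventually_gt_atTop (0:ℝ)] with y hy
          exact (f_pos hy.ne' t).le
        · filter_upwards [eventually_gt_atTop (0:ℝ)] with y hy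
          apply div_le_div_of_nonneg_left (by positivity) (by positivity)
          nlinarith [sq_nonneg (t - x)])
  simpa using this

lemma ofReal_g (σ : Measure ℝ) [IsFiniteMeasure σ] (x : ℝ) {y : ℝ} (hy : 0 < y) :
    ENNReal.ofReal (∫ t, f x y t ∂σ) = ∫⁻ t, ENNReal.ofReal (f x y t) ∂σ :=
  ofReal_integral_eq_lintegral_ofReal (f_integrable σ hy) (ae_of_all _ fun t => (f_pos hy.ne' t).le)

lemma pointwise_le (x : ℝ) {y : ℝ} (hy : 0 < y) (t : ℝ) :
    ENNReal.ofReal (f x y t) ≤ ENNReal.ofReal (1 + t ^ 2) / ENNReal.ofReal ((t - x) ^ 2) := by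
  rcases eq_or_ne t x with h | h
  · subst h
    simp [ENNReal.div_zero (by positivity : ENNReal.ofReal (1 + t ^ 2) ≠ 0)]
  · have hd : (0:ℝ) < (t - x) ^ 2 := by
      have := sub_ne_zero.mpr h; positivity
    rw [← ENNReal.ofReal_div_of_pos hd]
    apply ENNReal.ofReal_le_ofReal
    apply div_le_div_of_nonneg_left (by positivity) hd
    nlinarith

lemma seq_pos (n : ℕ) : (0:ℝ) < 1 / (n + 1) := by positivity

lemma seq_mono (x t : ℝ) : Monotone fun n : ℕ => ENNReal.ofReal (f x (1 / (n + 1)) t) := by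
  intro n m hnm
  apply ENNReal.ofReal_le_ofReal
  apply f_anti t (seq_pos m)
  apply div_le_div_of_nonneg_left one_pos.le (by positivity)
  exact_mod_cast by exact_mod_cast Nat.add_le_add_right hnm 1

lemma pointwise_sup (x t : ℝ) :
    (⨆ n : ℕ, ENNReal.ofReal (f x (1 / (n + 1)) t)) =
      ENNReal.ofReal (1 + t ^ 2) / ENNReal.ofReal ((t - x) ^ 2) := by
  have hmono := seq_mono x t
  refine tendsto_nhds_unique (tendsto_atTop_iSup hmono) ?_
  rcases eq_or_ne t x with h | h
  · subst h
    rw [show ((t - t) ^ 2 : ℝ) = 0 by ring, ENNReal.ofReal_zero,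
      ENNReal.div_zero (by positivity : ENNReal.ofReal (1 + t ^ 2) ≠ 0)]
    have h1 : Tendsto (fun n : ℕ => f t (1 / (n + 1)) t) atTop atTop := by
      have : ∀ n : ℕ, f t (1 / (n + 1)) t = (1 + t ^ 2) * (n + 1) ^ 2 := by
        intro n
        rw [f]
        field_simp
        ring
      rw [tendsto_congr this]
      apply Tendsto.const_mul_atTop (by positivity)
      apply tendsto_atTop_mono
        (fun n : ℕ => by nlinarith [Nat.cast_nonneg (α := ℝ) n] : ∀ n : ℕ, (n:ℝ) ≤ ((n:ℝ) + 1) ^ 2)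
      exact tendsto_natCast_atTop_atTop
    exact ENNReal.tendsto_ofReal_atTop.comp h1
  · have hd : (0:ℝ) < (t - x) ^ 2 := by have := sub_ne_zero.mpr h; positivity
    rw [← ENNReal.ofReal_div_of_pos hd]
    apply ENNReal.tendsto_ofReal
    have hden : Tendsto (fun n : ℕ => (t - x) ^ 2 + (1 / (n + 1 : ℝ)) ^ 2) atTop
        (nhds ((t - x) ^ 2)) := by
      have h0 : Tendsto (fun n : ℕ => 1 / (n + 1 : ℝ)) atTop (nhds 0) :=
        tendsto_one_div_add_atTop_nhds_zero_nat
      have := ((h0.pow 2).const_add ((t - x) ^ 2))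
      simpa using this
    have := (tendsto_const_nhds (x := 1 + t ^ 2) (f := atTop (α := ℕ))).div hden hd.ne'
    simpa [f, Pi.div_def] using this

end Stmt3Aux

/-- The extended-real integral `∫ (1+t²)/(t-x)² dσ(t)`, equal to `+∞` when e.g.
`σ({x}) > 0` (note that in `ℝ≥0∞` one has `a / 0 = ∞` for `a ≠ 0`). -/
noncomputable def singIntegral (σ : MeasureTheory.Measure ℝ) (x : ℝ) : ENNReal :=
  ∫⁻ t : ℝ, ENNReal.ofReal (1 + t ^ 2) / ENNReal.ofReal ((t - x) ^ 2) ∂σ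

namespace Stmt3Aux
lemma sup_eq (σ : Measure ℝ) [IsFiniteMeasure σ] (x : ℝ) :
    singIntegral σ x = ⨆ n : ℕ, ∫⁻ t, ENNReal.ofReal (f x (1 / (n + 1)) t) ∂σ := by
  rw [singIntegral, ← lintegral_iSup]
  · exact lintegral_congr fun t => (pointwise_sup x t).symm
  · exact fun n => (f_cont_t (seq_pos n).ne').measurable.ennreal_ofReal
  · exact fun n m hnm t => seq_mono x t hnm
end Stmt3Aux

theorem stmt3 (σ : Measure ℝ) [IsFiniteMeasure σ] (hσ : σ ≠ 0) (x : ℝ)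
    (g : ℝ → ℝ)
    (hg : ∀ y : ℝ, g y = ∫ t : ℝ, (1 + t ^ 2) / ((t - x) ^ 2 + y ^ 2) ∂σ) :
    ContinuousOn g (Set.Ioi 0) ∧
    StrictAntiOn g (Set.Ioi 0) ∧
    Tendsto g atTop (nhds 0) ∧
    (∀ y₁ y₂ : ℝ, 0 < y₁ → 0 < y₂ → g y₁ = 1 → g y₂ = 1 → y₁ = y₂) ∧
    ((∃ y : ℝ, 0 < y ∧ g y = 1) ↔ 1 < singIntegral σ x) := by
  have hgf : ∀ y, g y = ∫ t, Stmt3Aux.f x y t ∂σ := hg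
  have hcont : ContinuousOn g (Set.Ioi 0) := by
    intro y hy
    have := (Stmt3Aux.g_contAt σ x (Set.mem_Ioi.mp hy)).continuousWithinAt (s := Set.Ioi 0)
    exact this.congr (fun z _ => hgf z) (hgf y)
  have hanti : StrictAntiOn g (Set.Ioi 0) := by
    intro y₁ h1 y₂ h2 h12
    rw [hgf y₁, hgf y₂]
    exact Stmt3Aux.g_strictAnti σ hσ x (Set.mem_Ioi.mp h1) h12
  have htend : Tendsto g atTop (nhds 0) := by
    have := Stmt3Aux.g_tendsto σ x
    exact this.congr (fun y => (hgf y).symm)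
  refine ⟨hcont, hanti, htend, ?_, ?_⟩
  · intro y₁ y₂ h1 h2 e1 e2
    exact hanti.injOn h1 h2 (by rw [e1, e2])
  · constructor
    · rintro ⟨y, hy, hgy⟩
      have h2 : (0:ℝ) < y / 2 := by linarith
      have hlt : 1 < g (y / 2) := by
        have := hanti h2 (Set.mem_Ioi.mpr hy) (by linarith : y / 2 < y)
        rw [hgy] at this; exact this
      calc (1 : ENNReal) < ENNReal.ofReal (g (y / 2)) := by
            rw [show (1:ENNReal) = ENNReal.ofReal 1 by simp]
            exact (ENNReal.ofReal_lt_ofReal_iff (by linarith)).mpr hlt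
        _ = ∫⁻ t, ENNReal.ofReal (Stmt3Aux.f x (y / 2) t) ∂σ := by rw [hgf]; exact Stmt3Aux.ofReal_g σ x h2
        _ ≤ singIntegral σ x := lintegral_mono (Stmt3Aux.pointwise_le x h2)
    · intro h
      rw [Stmt3Aux.sup_eq σ x, lt_iSup_iff] at h
      obtain ⟨n, hn⟩ := h
      set y₀ : ℝ := 1 / (n + 1) with hy₀def
      have hy₀ : (0:ℝ) < y₀ := Stmt3Aux.seq_pos n
      have hgy₀ : 1 < g y₀ := by
        rw [← Stmt3Aux.ofReal_g σ x hy₀, ← hgf] at hn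
        exact ENNReal.one_lt_ofReal.mp hn
      obtain ⟨B, hB1, hB2⟩ :=
        ((eventually_gt_atTop y₀).and (htend.eventually_lt_const one_pos)).exists
      have hIcc : Set.Icc y₀ B ⊆ Set.Ioi 0 := fun z hz => lt_of_lt_of_le hy₀ hz.1
      have := intermediate_value_Icc' hB1.le (hcont.mono hIcc)
      obtain ⟨c, hc, hgc⟩ := this ⟨hB2.le, hgy₀.le⟩
      exact ⟨c, lt_of_lt_of_le hy₀ hc.1, hgc⟩
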